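/- Let T = S[y_1,...,y_m,z] with I = (f_1,...,f_m) ⊆ S, and let Q be the kernel of the S-algebra map T → S[t] sending y_i ↦ f_i t and z ↦ t^2. Then the elements g_m^even and g_m^odd defined for the sign pattern (f_1, -f_2, ±f_3,...,±f_m) lie in the corresponding Rees-like prime ideal, the kernel of the map sending y_1 ↦ f_1 t, y_2 ↦ -f_2 t, y_i ↦ ±f_i t (i ≥ 3), z ↦ t^2. -/

import Mathlib

/-- `g m even = Σ_{S ⊆ {1,…,m}, |S| even} y^{S̄} f^S z^{|S|/2}`, where
`y^{S̄} = Π_{i ∉ S} Y i` and `f^S = Π_{i ∈ S} F i`. -/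
def gEvenFull {T : Type*} [CommRing T] {m : ℕ} (Y F : Fin m → T) (Z : T) : T :=
  ∑ S ∈ Finset.univ.powerset.filter (fun S : Finset (Fin m) => Even S.card),
    (∏ i ∈ Sᶜ, Y i) * (∏ i ∈ S, F i) * Z ^ (S.card / 2)

/-- `g m odd = Σ_{S ⊆ {1,…,m}, |S| odd} y^{S̄} f^S z^{(|S|-1)/2}`. -/
def gOddFull {T : Type*} [CommRing T] {m : ℕ} (Y F : Fin m → T) (Z : T) : T :=
  ∑ S ∈ Finset.univ.powerset.filter (fun S : Finset (Fin m) => Odd S.card),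
    (∏ i ∈ Sᶜ, Y i) * (∏ i ∈ S, F i) * Z ^ ((S.card - 1) / 2)

lemma myCard_symmDiff_mod_two {ι : Type*} [DecidableEq ι] (S A : Finset ι) :
    (symmDiff S A).card % 2 = (S.card + A.card) % 2 := by
  have h1 : (symmDiff S A).card + (S ∩ A).card = (S ∪ A).card := by
    have hd : Disjoint (symmDiff S A) (S ∩ A) := disjoint_symmDiff_inf S A
    have hu : (symmDiff S A) ∪ (S ∩ A) = S ∪ A := by simpa using symmDiff_sup_inf S A
    rw [← hu, Finset.card_union_of_disjoint hd]
  have h2 := Finset.card_union_add_card_inter S A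
  omega

lemma myProd_symmDiff {R : Type*} [CommMonoid R] {ι : Type*} [DecidableEq ι]
    (ε : ι → R) (h : ∀ i, ε i * ε i = 1) (T A : Finset ι) :
    ∏ i ∈ symmDiff T A, ε i = (∏ i ∈ T, ε i) * ∏ i ∈ A, ε i := by
  have hd : Disjoint (symmDiff T A) (T ∩ A) := disjoint_symmDiff_inf T A
  have hu : (symmDiff T A) ∪ (T ∩ A) = T ∪ A := by
    simpa using symmDiff_sup_inf T A
  have key : (∏ i ∈ symmDiff T A, ε i) * ∏ i ∈ T ∩ A, ε i = ∏ i ∈ T ∪ A, ε i := by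
    rw [← Finset.prod_union hd, hu]
  have sq : (∏ i ∈ T ∩ A, ε i) * ∏ i ∈ T ∩ A, ε i = 1 := by
    rw [← Finset.prod_mul_distrib]
    exact Finset.prod_eq_one fun i _ => h i
  calc ∏ i ∈ symmDiff T A, ε i
      = (∏ i ∈ symmDiff T A, ε i) * ((∏ i ∈ T ∩ A, ε i) * ∏ i ∈ T ∩ A, ε i) := by rw [sq, mul_one]
    _ = ((∏ i ∈ symmDiff T A, ε i) * ∏ i ∈ T ∩ A, ε i) * ∏ i ∈ T ∩ A, ε i := by rw [mul_assoc]
    _ = (∏ i ∈ T ∪ A, ε i) * ∏ i ∈ T ∩ A, ε i := by rw [key]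
    _ = (∏ i ∈ T, ε i) * ∏ i ∈ A, ε i := Finset.prod_union_inter

lemma mySum_eps_zero {R : Type*} [CommRing R] {m : ℕ} (hm : 2 ≤ m)
    (ε : Fin m → R) (hsq : ∀ i, ε i * ε i = 1)
    (h01 : ε ⟨0, Nat.zero_lt_two.trans_le hm⟩ * ε ⟨1, Nat.one_lt_two.trans_le hm⟩ = -1)
    (P : ℕ → Prop) [DecidablePred P] (hP : ∀ a b : ℕ, a % 2 = b % 2 → (P a ↔ P b)) :
    ∑ S ∈ Finset.univ.powerset.filter (fun S : Finset (Fin m) => P S.card),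
      ∏ i ∈ Sᶜ, ε i = 0 := by
  set i0 : Fin m := ⟨0, Nat.zero_lt_two.trans_le hm⟩
  set i1 : Fin m := ⟨1, Nat.one_lt_two.trans_le hm⟩
  have hne : i0 ≠ i1 := by simp [i0, i1, Fin.ext_iff]
  set A : Finset (Fin m) := {i0, i1} with hA
  have hAcard : A.card = 2 := by rw [hA, Finset.card_insert_of_notMem (by simpa using hne)]; simp
  refine Finset.sum_involution (fun S _ => symmDiff S A) ?_ ?_ ?_ ?_
  · intro S _
    have hcompl : (symmDiff S A)ᶜ = symmDiff Sᶜ A := by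
      ext x
      simp only [Finset.mem_compl, Finset.mem_symmDiff]
      tauto
    rw [hcompl, myProd_symmDiff ε hsq]
    have : ∏ i ∈ A, ε i = -1 := by rw [hA, Finset.prod_pair hne, h01]
    rw [this]
    ring
  · intro S _ _ h
    have : A = ⊥ := symmDiff_eq_left.mp h
    simp [hA] at this
  · intro S hS0
    simp only [Finset.mem_filter, Finset.mem_powerset, Finset.subset_univ, true_and] at hS0
    simp only [Finset.mem_filter, Finset.mem_powerset, Finset.subset_univ, true_and]
    refine (hP _ _ ?_).mpr hS0
    have := myCard_symmDiff_mod_two S A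
    omega
  · intro S _
    exact symmDiff_symmDiff_cancel_right A S

lemma myTerm_eval {R : Type*} [CommRing R] {m : ℕ} (a b : Fin m → R) (t : R)
    (S : Finset (Fin m)) (e : ℕ) :
    (∏ i ∈ Sᶜ, (a i * b i * t)) * (∏ i ∈ S, b i) * (t ^ 2) ^ e
    = (∏ i ∈ Sᶜ, a i) * ((∏ i, b i) * t ^ (m - S.card + 2 * e)) := by
  have h2 : (∏ i ∈ Sᶜ, b i) * ∏ i ∈ S, b i = ∏ i, b i := Finset.prod_compl_mul_prod S b
  rw [Finset.prod_mul_distrib, Finset.prod_mul_distrib, Finset.prod_const, Finset.card_compl,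
    Fintype.card_fin, ← pow_mul, pow_add, ← h2]
  ring

open MvPolynomial in
/-- **Lemma (evenodd).** Let `S = k[x 1, …, x n]`, `f 1, …, f m ∈ S`, and
`T = S[y 1, …, y m, z]`.  Let `ε i ∈ {±1}` with `ε 1 = 1` and `ε 2 = -1` (so `m ≥ 2`).
Then `g m even` and `g m odd` lie in the Rees-like prime `RLP(ε 1 f 1, …, ε m f m)`, the kernel
of the `S`-algebra map `T → S[t]`, `y i ↦ ε i f i t`, `z ↦ t²`. -/
theorem gEven_gOdd_mem_signed_reesLikePrime
    (k : Type*) [Field k] (n m : ℕ) (hm : 2 ≤ m)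
    (f : Fin m → MvPolynomial (Fin n) k)
    (ε : Fin m → MvPolynomial (Fin n) k)
    (hε : ∀ i, ε i = 1 ∨ ε i = -1)
    (hε0 : ε ⟨0, by omega⟩ = 1) (hε1 : ε ⟨1, by omega⟩ = -1) :
    (aeval (fun v : Option (Fin m) =>
        v.elim ((Polynomial.X : Polynomial (MvPolynomial (Fin n) k)) ^ 2)
          (fun i => Polynomial.C (ε i * f i) * Polynomial.X)) :
        MvPolynomial (Option (Fin m)) (MvPolynomial (Fin n) k) →ₐ[MvPolynomial (Fin n) k]
          Polynomial (MvPolynomial (Fin n) k))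
      (gEvenFull (fun i => X (some i)) (fun i => C (f i)) (X none)) = 0 ∧
    (aeval (fun v : Option (Fin m) =>
        v.elim ((Polynomial.X : Polynomial (MvPolynomial (Fin n) k)) ^ 2)
          (fun i => Polynomial.C (ε i * f i) * Polynomial.X)) :
        MvPolynomial (Option (Fin m)) (MvPolynomial (Fin n) k) →ₐ[MvPolynomial (Fin n) k]
          Polynomial (MvPolynomial (Fin n) k))
      (gOddFull (fun i => X (some i)) (fun i => C (f i)) (X none)) = 0 := by
  have hsq : ∀ i, ε i * ε i = 1 := fun i => by rcases hε i with h | h <;> simp [h]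
  have h01 : ε ⟨0, by omega⟩ * ε ⟨1, by omega⟩ = -1 := by rw [hε0, hε1, one_mul]
  constructor
  · rw [gEvenFull, map_sum]
    have hterm : ∀ S ∈ Finset.univ.powerset.filter
        (fun S : Finset (Fin m) => Even S.card),
        (aeval (fun v : Option (Fin m) =>
          v.elim ((Polynomial.X : Polynomial (MvPolynomial (Fin n) k)) ^ 2)
            (fun i => Polynomial.C (ε i * f i) * Polynomial.X)))
          ((∏ i ∈ Sᶜ, X (some i)) * (∏ i ∈ S, C (f i)) * (X (none : Option (Fin m))) ^ (S.card / 2))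
        = (∏ i ∈ Sᶜ, Polynomial.C (ε i)) *
            ((∏ i, Polynomial.C (f i)) * Polynomial.X ^ m) := by
      intro S hS
      simp only [Finset.mem_filter, Finset.mem_powerset] at hS
      have hcard : S.card ≤ m := by simpa using Finset.card_le_univ S
      have hev : S.card % 2 = 0 := Nat.even_iff.mp hS.2
      simp only [map_mul, map_prod, map_pow, aeval_X, aeval_C, Polynomial.algebraMap_eq,
        Option.elim]
      rw [myTerm_eval (fun i => Polynomial.C (ε i)) (fun i => Polynomial.C (f i)) Polynomial.X
        S (S.card / 2), show m - S.card + 2 * (S.card / 2) = m by omega]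
    have hsqP : ∀ i, (Polynomial.C (ε i) : Polynomial (MvPolynomial (Fin n) k)) *
        Polynomial.C (ε i) = 1 := fun i => by rw [← map_mul, hsq, map_one]
    have h01P : (Polynomial.C (ε ⟨0, by omega⟩) : Polynomial (MvPolynomial (Fin n) k)) *
        Polynomial.C (ε ⟨1, by omega⟩) = -1 := by rw [← map_mul, h01, map_neg, map_one]
    rw [Finset.sum_congr rfl hterm, ← Finset.sum_mul,
      mySum_eps_zero hm (fun i => Polynomial.C (ε i)) hsqP h01P (fun a => Even a)
        (fun a b h => by simp [Nat.even_iff, h]), zero_mul]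
  · rw [gOddFull, map_sum]
    have hterm : ∀ S ∈ Finset.univ.powerset.filter
        (fun S : Finset (Fin m) => Odd S.card),
        (aeval (fun v : Option (Fin m) =>
          v.elim ((Polynomial.X : Polynomial (MvPolynomial (Fin n) k)) ^ 2)
            (fun i => Polynomial.C (ε i * f i) * Polynomial.X)))
          ((∏ i ∈ Sᶜ, X (some i)) * (∏ i ∈ S, C (f i)) *
            (X (none : Option (Fin m))) ^ ((S.card - 1) / 2))
        = (∏ i ∈ Sᶜ, Polynomial.C (ε i)) *
            ((∏ i, Polynomial.C (f i)) * Polynomial.X ^ (m - 1)) := by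
      intro S hS
      simp only [Finset.mem_filter, Finset.mem_powerset] at hS
      have hcard : S.card ≤ m := by simpa using Finset.card_le_univ S
      have hodd : S.card % 2 = 1 := Nat.odd_iff.mp hS.2
      simp only [map_mul, map_prod, map_pow, aeval_X, aeval_C, Polynomial.algebraMap_eq,
        Option.elim]
      rw [myTerm_eval (fun i => Polynomial.C (ε i)) (fun i => Polynomial.C (f i)) Polynomial.X
        S ((S.card - 1) / 2), show m - S.card + 2 * ((S.card - 1) / 2) = m - 1 by omega]
    have hsqP : ∀ i, (Polynomial.C (ε i) : Polynomial (MvPolynomial (Fin n) k)) *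
        Polynomial.C (ε i) = 1 := fun i => by rw [← map_mul, hsq, map_one]
    have h01P : (Polynomial.C (ε ⟨0, by omega⟩) : Polynomial (MvPolynomial (Fin n) k)) *
        Polynomial.C (ε ⟨1, by omega⟩) = -1 := by rw [← map_mul, h01, map_neg, map_one]
    rw [Finset.sum_congr rfl hterm, ← Finset.sum_mul,
      mySum_eps_zero hm (fun i => Polynomial.C (ε i)) hsqP h01P (fun a => Odd a)
        (fun a b h => by simp [Nat.odd_iff, h]), zero_mul]
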